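/- Let 1 ≤ q < p ≤ ∞ with q < 2, and let A be a real m×n matrix. Then ‖(A∘A)^T : ℓ_{q*/2}^m → ℓ_{p*/2}^n‖^{1/2} ≳_{p,q} max_{j≤n} √(ln(j+1)) · b_j^↓, where b_j = ‖(a_{ij})_{i≤m}‖_{2q/(2−q)} and (b_j^↓) is the non-increasing rearrangement of (b_j). -/

import Mathlib

open MeasureTheory ProbabilityTheory Finset
open scoped ENNReal

/-- The ℓ_p (quasi-)norm on ℝ^n, for p ∈ (0,∞]. -/
noncomputable def lpNorm (p : ℝ≥0∞) {n : ℕ} (x : Fin n → ℝ) : ℝ :=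
  if p = ⊤ then ⨆ j, |x j| else (∑ j, |x j| ^ p.toReal) ^ (1 / p.toReal)

/-- The operator (quasi-)norm of a matrix `B` acting from ℓ_p^n to ℓ_q^m. -/
noncomputable def opNorm (p q : ℝ≥0∞) {m n : ℕ} (B : Fin m → Fin n → ℝ) : ℝ :=
  sSup {c | ∃ x : Fin n → ℝ, lpNorm p x ≤ 1 ∧ c = lpNorm q (fun i => ∑ j, B i j * x j)}

lemma lpNorm_nonneg' (p : ℝ≥0∞) {n : ℕ} (x : Fin n → ℝ) : 0 ≤ lpNorm p x := by
  unfold _root_.lpNorm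
  split
  · exact Real.iSup_nonneg fun j => abs_nonneg _
  · positivity

lemma abs_le_lpNorm' {p : ℝ≥0∞} {n : ℕ} (x : Fin n → ℝ) (i : Fin n)
    (hp : p = ⊤ ∨ 0 < p.toReal) : |x i| ≤ lpNorm p x := by
  by_cases h : p = ⊤
  · rw [_root_.lpNorm, if_pos h]
    exact le_ciSup (f := fun j => |x j|) (Set.Finite.bddAbove (Set.finite_range _)) i
  · have hpt : 0 < p.toReal := hp.resolve_left h
    rw [_root_.lpNorm, if_neg h]
    calc |x i| = (|x i| ^ p.toReal) ^ (1 / p.toReal) := by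
          rw [← Real.rpow_mul (abs_nonneg _), mul_one_div, div_self hpt.ne', Real.rpow_one]
      _ ≤ (∑ j, |x j| ^ p.toReal) ^ (1 / p.toReal) := by
          apply Real.rpow_le_rpow (by positivity)
            (Finset.single_le_sum (fun j _ => by positivity) (mem_univ i)) (by positivity)

lemma le_opNorm' (s u : ℝ≥0∞) (hs : s = ⊤ ∨ 0 < s.toReal) (hu : u ≠ ⊤)
    (hu0 : 0 < u.toReal) {m n : ℕ} (B : Fin n → Fin m → ℝ) (x0 : Fin m → ℝ)
    (hx0 : lpNorm s x0 ≤ 1) :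
    lpNorm u (fun j => ∑ i, B j i * x0 i) ≤ opNorm s u B := by
  apply le_csSup
  · refine ⟨(∑ j, (∑ i, |B j i|) ^ u.toReal) ^ (1 / u.toReal), ?_⟩
    rintro c ⟨x, hx, rfl⟩
    rw [_root_.lpNorm, if_neg hu]
    apply Real.rpow_le_rpow (by positivity) ?_ (by positivity)
    apply Finset.sum_le_sum
    intro j _
    apply Real.rpow_le_rpow (abs_nonneg _) ?_ hu0.le
    calc |∑ i, B j i * x i| ≤ ∑ i, |B j i * x i| := Finset.abs_sum_le_sum_abs _ _
      _ ≤ ∑ i, |B j i| := by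
          apply Finset.sum_le_sum
          intro i _
          rw [abs_mul]
          have hxi : |x i| ≤ 1 := le_trans (abs_le_lpNorm' x i hs) hx
          nlinarith [abs_nonneg (B j i), abs_nonneg (x i)]
  · exact ⟨x0, hx0, rfl⟩

lemma key_lower' (s u : ℝ≥0∞) (hs : s = ⊤ ∨ 0 < s.toReal) (hu : u ≠ ⊤)
    (hu0 : 0 < u.toReal) {m n : ℕ} (B : Fin n → Fin m → ℝ) (σ : Equiv.Perm (Fin n))
    (x : Fin m → ℝ) (k : Fin n) (c0 : ℝ) (hc0 : 0 ≤ c0)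
    (hx1 : lpNorm s x ≤ 1) (hBx : ∀ j', 0 ≤ ∑ i, B j' i * x i)
    (hlow : ∀ j : Fin n, j ≤ k → c0 ≤ ∑ i, B (σ j) i * x i) :
    (((k:ℕ)+1 : ℕ):ℝ) ^ (1/u.toReal) * c0 ≤ opNorm s u B := by
  refine le_trans ?_ (le_opNorm' s u hs hu hu0 B x hx1)
  rw [_root_.lpNorm, if_neg hu]
  set uR := u.toReal with huRdef
  set e : Fin n → ℝ := fun j' => ∑ i, B j' i * x i with hedef
  set K : ℕ := (k:ℕ)+1 with hKdef
  have hKpos : (0:ℝ) < (K:ℝ) := by positivity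
  have step0 : ∑ j', |e j'| ^ uR = ∑ j', (e j') ^ uR := by
    apply Finset.sum_congr rfl
    intro j' _
    rw [abs_of_nonneg (hBx j')]
  have step1 : (K:ℝ) * c0 ^ uR ≤ ∑ j', (e j') ^ uR := by
    calc (K:ℝ) * c0 ^ uR = ∑ _j ∈ Finset.Iic k, c0 ^ uR := by
          rw [Finset.sum_const, Fin.card_Iic, nsmul_eq_mul]
      _ ≤ ∑ j ∈ Finset.Iic k, (e (σ j)) ^ uR := by
          apply Finset.sum_le_sum
          intro j hj
          exact Real.rpow_le_rpow hc0 (hlow j (Finset.mem_Iic.mp hj)) hu0.le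
      _ = ∑ j' ∈ (Finset.Iic k).image σ, (e j') ^ uR := by
          rw [Finset.sum_image (fun a _ b _ h => σ.injective h)]
      _ ≤ ∑ j', (e j') ^ uR := by
          apply Finset.sum_le_sum_of_subset_of_nonneg (Finset.subset_univ _)
          intro j' _ _
          have := hBx j'
          positivity
  calc (K:ℝ) ^ (1/uR) * c0 = ((K:ℝ) * c0 ^ uR) ^ (1/uR) := by
        rw [Real.mul_rpow hKpos.le (by positivity), ← Real.rpow_mul hc0,
          mul_one_div, div_self hu0.ne', Real.rpow_one]
    _ ≤ (∑ j', |e j'| ^ uR) ^ (1/uR) := by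
        rw [step0]
        exact Real.rpow_le_rpow (by positivity) step1 (by positivity)

lemma sq_rpow' (rR : ℝ) (a : ℝ) : (a^2) ^ rR = |a| ^ (2*rR) := by
  rw [← sq_abs, ← Real.rpow_natCast |a| 2, ← Real.rpow_mul (abs_nonneg a)]
  norm_num

lemma construct_B' {m n : ℕ} (A : Fin m → Fin n → ℝ) (σ : Equiv.Perm (Fin n)) (k : Fin n)
    (rR sR : ℝ) (hrR1 : 1 < rR) (hsR : 0 < sR) (hconj : (rR - 1) * sR = rR)
    (s : ℝ≥0∞) (hsne : s ≠ ⊤) (hsR' : s.toReal = sR)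
    (r2 : ℝ≥0∞) (hr2ne : r2 ≠ ⊤) (hr2R : r2.toReal = 2*rR)
    (hmono : ∀ j, j ≤ k → lpNorm r2 (fun i => A i (σ k)) ≤ lpNorm r2 (fun i => A i (σ j)))
    (ht : 0 < lpNorm r2 (fun i => A i (σ k))) :
    ∃ x : Fin m → ℝ, (∀ i, 0 ≤ x i) ∧ lpNorm s x ≤ 1 ∧
      ∀ j, j ≤ k → (lpNorm r2 (fun i => A i (σ k)))^2 / (((k:ℕ)+1:ℝ)) ^ (1/sR) ≤
        ∑ i, (A i (σ j))^2 * x i := by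
  have hrR0 : 0 < rR := by linarith
  set t : ℝ := lpNorm r2 (fun i => A i (σ k)) with htdef
  set P : Fin n → ℝ := fun j => ∑ i, ((A i (σ j))^2) ^ rR with hPdef
  have hP0 : ∀ j, 0 ≤ P j := fun j => by rw [hPdef]; positivity
  have hPb : ∀ j, lpNorm r2 (fun i => A i (σ j)) = P j ^ (1/(2*rR)) := by
    intro j
    rw [_root_.lpNorm, if_neg hr2ne, hr2R, hPdef]
    congr 1
    exact Finset.sum_congr rfl fun i _ => (sq_rpow' rR (A i (σ j))).symm
  have hbP2 : ∀ j, (lpNorm r2 (fun i => A i (σ j)))^2 = P j ^ (1/rR) := by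
    intro j
    rw [hPb j, ← Real.rpow_natCast (P j ^ (1/(2*rR))) 2, ← Real.rpow_mul (hP0 j)]
    congr 1
    field_simp
    norm_num
  have hPpos : ∀ j, j ≤ k → 0 < P j := by
    intro j hj
    rcases (hP0 j).lt_or_eq with h | h
    · exact h
    · exfalso
      have h1 : t^2 ≤ P j ^ (1/rR) := by
        rw [← hbP2 j]
        have := hmono j hj
        nlinarith
      rw [← h, Real.zero_rpow (by positivity)] at h1
      nlinarith
  set N : Fin n → ℝ := fun j => P j ^ (1/rR) with hNdef
  have hNpos : ∀ j, j ≤ k → 0 < N j := fun j hj => Real.rpow_pos_of_pos (hPpos j hj) _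
  have hNt : ∀ j, j ≤ k → t^2 ≤ N j := by
    intro j hj
    show t^2 ≤ P j ^ (1/rR)
    rw [← hbP2 j]
    have := hmono j hj
    nlinarith
  have hNrR : ∀ j, j ≤ k → N j ^ rR = P j := by
    intro j hj
    show (P j ^ (1/rR)) ^ rR = P j
    rw [← Real.rpow_mul (hP0 j), one_div, inv_mul_cancel₀ hrR0.ne', Real.rpow_one]
  set K : ℝ := ((k:ℕ)+1:ℝ) with hKdef
  have hKpos : (0:ℝ) < K := by positivity
  set g : Fin n → Fin m → ℝ := fun j i => ((A i (σ j))^2) ^ (rR - 1) / N j ^ (rR-1) with hgdef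
  have hg0 : ∀ j i, 0 ≤ g j i := by
    intro j i
    show 0 ≤ ((A i (σ j))^2) ^ (rR - 1) / N j ^ (rR-1)
    positivity
  have hgsum : ∀ j, j ≤ k → ∑ i, (g j i) ^ sR = 1 := by
    intro j hj
    have he : ∀ i, (g j i) ^ sR = ((A i (σ j))^2) ^ rR / P j := by
      intro i
      show (((A i (σ j))^2) ^ (rR - 1) / N j ^ (rR-1)) ^ sR = _
      rw [Real.div_rpow (by positivity) (by positivity),
        ← Real.rpow_mul (by positivity), ← Real.rpow_mul (le_of_lt (hNpos j hj)), hconj,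
        hNrR j hj]
    rw [Finset.sum_congr rfl (fun i _ => he i), ← Finset.sum_div]
    rw [div_eq_one_iff_eq (hPpos j hj).ne']
  set x : Fin m → ℝ := fun i => (∑ j ∈ Iic k, (g j i) ^ sR) ^ (1/sR) / K ^ (1/sR) with hxdef
  have hx0 : ∀ i, 0 ≤ x i := by
    intro i
    show 0 ≤ (∑ j ∈ Iic k, (g j i) ^ sR) ^ (1/sR) / K ^ (1/sR)
    positivity
  refine ⟨x, hx0, ?_, ?_⟩
  · rw [_root_.lpNorm, if_neg hsne, hsR']
    have hxsR : ∀ i, |x i| ^ sR = (∑ j ∈ Iic k, (g j i) ^ sR) / K := by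
      intro i
      rw [abs_of_nonneg (hx0 i)]
      show ((∑ j ∈ Iic k, (g j i)^sR)^(1/sR) / K^(1/sR)) ^ sR = _
      rw [Real.div_rpow (by positivity) (by positivity), ← Real.rpow_mul (by positivity),
        ← Real.rpow_mul hKpos.le, one_div, inv_mul_cancel₀ hsR.ne', Real.rpow_one,
        Real.rpow_one]
    rw [Finset.sum_congr rfl (fun i _ => hxsR i), ← Finset.sum_div, Finset.sum_comm]
    rw [Finset.sum_congr rfl (fun j hj => hgsum j (Finset.mem_Iic.mp hj))]
    rw [Finset.sum_const, Fin.card_Iic, nsmul_eq_mul, mul_one]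
    have hcast : (((k:ℕ)+1 : ℕ):ℝ) = K := by push_cast [hKdef]; ring
    rw [hcast, div_self hKpos.ne', Real.one_rpow]
  · intro j hj
    have hxge : ∀ i, g j i / K ^ (1/sR) ≤ x i := by
      intro i
      show _ ≤ (∑ j' ∈ Iic k, (g j' i)^sR)^(1/sR) / K^(1/sR)
      gcongr
      · calc g j i = ((g j i)^sR)^(1/sR) := by
              rw [← Real.rpow_mul (hg0 j i), mul_one_div, div_self hsR.ne', Real.rpow_one]
          _ ≤ _ := Real.rpow_le_rpow (by positivity)
              (Finset.single_le_sum (f := fun j' => (g j' i)^sR)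
                (fun j' _ => by positivity) (Finset.mem_Iic.mpr hj))
              (by positivity)
    have hsum : ∑ i, (A i (σ j))^2 * g j i = N j := by
      have hterm : ∀ i : Fin m, (A i (σ j))^2 * g j i = ((A i (σ j))^2)^rR / N j ^ (rR-1) := by
        intro i
        show (A i (σ j))^2 * (((A i (σ j))^2)^(rR-1) / N j^(rR-1)) = _
        rw [← mul_div_assoc]
        congr 1
        rcases eq_or_lt_of_le (sq_nonneg (A i (σ j))) with h | h
        · rw [← h, Real.zero_rpow hrR0.ne', Real.zero_rpow (by linarith : rR - 1 ≠ 0), mul_zero]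
        · have hadd := Real.rpow_add h 1 (rR-1)
          rw [Real.rpow_one] at hadd
          rw [← hadd]
          congr 1
          ring
      rw [Finset.sum_congr rfl (fun i _ => hterm i), ← Finset.sum_div]
      show P j / N j ^ (rR - 1) = N j
      rw [← hNrR j hj, ← Real.rpow_sub (hNpos j hj), show rR - (rR-1) = 1 by ring,
        Real.rpow_one]
    calc t^2/K^(1/sR) ≤ N j / K^(1/sR) := by
          gcongr
          exact hNt j hj
      _ = ∑ i, (A i (σ j))^2 * (g j i / K^(1/sR)) := by
          rw [← hsum, Finset.sum_div]
          exact Finset.sum_congr rfl fun i _ => by rw [mul_div_assoc]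
      _ ≤ ∑ i, (A i (σ j))^2 * x i := by
          apply Finset.sum_le_sum
          intro i _
          exact mul_le_mul_of_nonneg_left (hxge i) (sq_nonneg _)

lemma construct_A' {m n : ℕ} (A : Fin m → Fin n → ℝ) (σ : Equiv.Perm (Fin n)) (k : Fin n)
    (hmono : ∀ j, j ≤ k → lpNorm (ENNReal.ofReal 2) (fun i => A i (σ k)) ≤
      lpNorm (ENNReal.ofReal 2) (fun i => A i (σ j))) :
    ∃ x : Fin m → ℝ, (∀ i, 0 ≤ x i) ∧ lpNorm ⊤ x ≤ 1 ∧
      ∀ j, j ≤ k → (lpNorm (ENNReal.ofReal 2) (fun i => A i (σ k)))^2 ≤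
        ∑ i, (A i (σ j))^2 * x i := by
  have h2ne : (ENNReal.ofReal 2) ≠ ⊤ := ENNReal.ofReal_ne_top
  have h2R : (ENNReal.ofReal 2).toReal = 2 := by
    rw [ENNReal.toReal_ofReal]; norm_num
  have hb2 : ∀ j, (lpNorm (ENNReal.ofReal 2) (fun i => A i (σ j)))^2 =
      ∑ i, (A i (σ j))^2 := by
    intro j
    rw [_root_.lpNorm, if_neg h2ne, h2R]
    rw [← Real.rpow_natCast ((∑ i, |A i (σ j)| ^ (2:ℝ)) ^ (1/(2:ℝ))) 2,
      ← Real.rpow_mul (by positivity)]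
    show (∑ i, |A i (σ j)| ^ (2:ℝ)) ^ ((1/(2:ℝ)) * ((2:ℕ):ℝ)) = ∑ i, (A i (σ j))^2
    rw [show (1/(2:ℝ)) * ((2:ℕ):ℝ) = 1 by norm_num, Real.rpow_one]
    exact Finset.sum_congr rfl fun i _ => by
      rw [show ((2:ℝ)) = ((2:ℕ):ℝ) by norm_num, Real.rpow_natCast, sq_abs]
  refine ⟨fun _ => 1, fun i => zero_le_one, ?_, ?_⟩
  · rw [_root_.lpNorm, if_pos rfl]
    exact Real.iSup_le (fun i => by norm_num) zero_le_one
  · intro j hj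
    have h1 := hmono j hj
    have h2 : (lpNorm (ENNReal.ofReal 2) (fun i => A i (σ k)))^2 ≤
        (lpNorm (ENNReal.ofReal 2) (fun i => A i (σ j)))^2 := by
      have h0 : 0 ≤ lpNorm (ENNReal.ofReal 2) (fun i => A i (σ k)) := by
        rw [_root_.lpNorm, if_neg h2ne]; positivity
      nlinarith
    calc _ ≤ (lpNorm (ENNReal.ofReal 2) (fun i => A i (σ j)))^2 := h2
      _ = ∑ i, (A i (σ j))^2 := hb2 j
      _ = ∑ i, (A i (σ j))^2 * 1 := by simp

/-- For `1 ≤ q < p ≤ ∞` with `q < 2`: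
`‖(A∘A)^T : ℓ_{q*/2}^m → ℓ_{p*/2}^n‖^{1/2} ≳_{p,q} max_j √(ln(j+1)) b_j^↓`,
where `b_j = ‖(a_{ij})_i‖_{2q/(2-q)}` and the rearrangement is encoded via a
sorting permutation `σ`. -/
theorem stmt16 (q : ℝ) (p pstar qstar : ℝ≥0∞)
    (hq1 : 1 ≤ q) (hq2 : q < 2) (hqp : ENNReal.ofReal q < p)
    (hpconj : 1 / p + 1 / pstar = 1)
    (hqconj : 1 / ENNReal.ofReal q + 1 / qstar = 1) :
    ∃ c : ℝ, 0 < c ∧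
      ∀ (m n : ℕ) (A : Fin m → Fin n → ℝ) (σ : Equiv.Perm (Fin n)),
      (∀ j j' : Fin n, j ≤ j' →
        lpNorm (ENNReal.ofReal (2 * q / (2 - q))) (fun i => A i (σ j')) ≤
          lpNorm (ENNReal.ofReal (2 * q / (2 - q))) (fun i => A i (σ j))) →
      c * (⨆ j : Fin n, Real.sqrt (Real.log ((j : ℕ) + 2)) *
          lpNorm (ENNReal.ofReal (2 * q / (2 - q))) (fun i => A i (σ j))) ≤
        Real.sqrt (opNorm (qstar / 2) (pstar / 2)
          (fun (j : Fin n) (i : Fin m) => A i j ^ 2)) := by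
  -- basic exponent facts
  have hq0 : (0:ℝ) < q := lt_of_lt_of_le one_pos hq1
  have h2q : (0:ℝ) < 2 - q := by linarith
  have hoq1 : (1:ℝ≥0∞) ≤ ENNReal.ofReal q := ENNReal.one_le_ofReal.mpr hq1
  have hps1 : 1 / pstar ≤ 1 := by
    conv_rhs => rw [← hpconj]
    exact le_add_self
  have hqs1 : 1 / qstar ≤ 1 := by
    conv_rhs => rw [← hqconj]
    exact le_add_self
  have hps0 : pstar ≠ 0 := by
    intro h; rw [h] at hps1; simp at hps1
  have hqs0 : qstar ≠ 0 := by
    intro h; rw [h] at hqs1; simp at hqs1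
  have hinvp : 1 / p < 1 / ENNReal.ofReal q := by
    simp only [one_div]; exact ENNReal.inv_lt_inv' hqp
  have hkey : 1 / qstar < 1 / pstar := by
    by_contra h
    push_neg at h
    have : (1:ℝ≥0∞) < 1 := by
      calc (1:ℝ≥0∞) = 1 / p + 1 / pstar := hpconj.symm
        _ ≤ 1 / p + 1 / qstar := add_le_add le_rfl h
        _ < 1 / ENNReal.ofReal q + 1 / qstar :=
            ENNReal.add_lt_add_right (by simpa [one_div, ENNReal.inv_eq_top] using hqs0) hinvp
        _ = 1 := hqconj
    exact this.false
  have hpstop : pstar ≠ ⊤ := by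
    intro h; rw [h] at hkey; simp [one_div] at hkey
  set pR := pstar.toReal with hpRdef
  set qR := qstar.toReal with hqRdef
  have hpRpos : 0 < pR := ENNReal.toReal_pos hps0 hpstop
  have hqRnn : 0 ≤ qR := ENNReal.toReal_nonneg
  have hps_ge1 : (1:ℝ≥0∞) ≤ pstar := ENNReal.inv_le_one.mp (by rwa [one_div] at hps1)
  have hpR1 : 1 ≤ pR := by
    rw [hpRdef, show (1:ℝ) = (1:ℝ≥0∞).toReal by simp]
    exact ENNReal.toReal_mono hpstop hps_ge1
  have hRlt : qR⁻¹ < pR⁻¹ := by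
    have h1 : (1/qstar).toReal < (1/pstar).toReal :=
      (ENNReal.toReal_lt_toReal (ne_top_of_le_ne_top ENNReal.one_ne_top hqs1)
        (ne_top_of_le_ne_top ENNReal.one_ne_top hps1)).mpr hkey
    simpa [one_div, ENNReal.toReal_inv] using h1
  set δ : ℝ := 2/pR - 2/qR with hδdef
  have hδpos : 0 < δ := by
    rw [hδdef, div_eq_mul_inv, div_eq_mul_inv]
    nlinarith
  have hδ2 : δ ≤ 2 := by
    have h1 : 2/pR ≤ 2 := by
      rw [div_le_iff₀ hpRpos]; nlinarith
    have h2 : 0 ≤ 2/qR := by positivity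
    rw [hδdef]; linarith
  have huR : (pstar/2).toReal = pR/2 := by
    rw [ENNReal.toReal_div]; norm_num; rfl
  have hu_ne_top : pstar/2 ≠ ⊤ := by
    simp [ENNReal.div_eq_top, hpstop]
  have hu0 : 0 < (pstar/2).toReal := by rw [huR]; positivity
  -- the constant
  refine ⟨Real.sqrt (δ/4), Real.sqrt_pos.mpr (by positivity), ?_⟩
  intro m n A σ hmono
  set c : ℝ := Real.sqrt (δ/4) with hcdef
  have hc0 : 0 ≤ c := Real.sqrt_nonneg _
  set r2 : ℝ≥0∞ := ENNReal.ofReal (2 * q / (2 - q)) with hr2def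
  set R : ℝ := Real.sqrt (opNorm (qstar / 2) (pstar / 2)
      (fun (j : Fin n) (i : Fin m) => A i j ^ 2)) with hRdef
  have hR0 : 0 ≤ R := Real.sqrt_nonneg _
  rw [Real.mul_iSup_of_nonneg hc0]
  apply Real.iSup_le _ hR0
  intro k
  set t : ℝ := lpNorm r2 (fun i => A i (σ k)) with htdef
  have ht0 : 0 ≤ t := lpNorm_nonneg' _ _
  rcases ht0.lt_or_eq with ht | ht
  swap
  · rw [← ht, mul_zero, mul_zero]; exact hR0
  -- main case : t > 0
  have hkc : (0:ℝ) ≤ ((k:ℕ):ℝ) := Nat.cast_nonneg _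
  have hlog0 : (0:ℝ) ≤ Real.log ((k:ℕ) + 2) := Real.log_nonneg (by linarith)
  set K : ℝ := (((k:ℕ):ℝ) + 1) with hKdef
  have hK1 : (1:ℝ) ≤ K := by rw [hKdef]; linarith
  have hKpos : (0:ℝ) < K := by linarith
  -- construct the test vector, in both cases obtaining the bound with c0 = t^2 / K^(2/qR)
  have hmono' : ∀ j, j ≤ k → lpNorm r2 (fun i => A i (σ k)) ≤ lpNorm r2 (fun i => A i (σ j)) :=
    fun j hj => hmono j k hj
  have hexists : ∃ x : Fin m → ℝ, (∀ i, 0 ≤ x i) ∧ lpNorm (qstar/2) x ≤ 1 ∧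
      ∀ j, j ≤ k → t^2 / K ^ (2/qR) ≤ ∑ i, (A i (σ j))^2 * x i := by
    by_cases hqtop : qstar = ⊤
    · -- q = 1
      have hqone : q = 1 := by
        rw [hqtop] at hqconj
        simp [one_div] at hqconj
        exact hqconj
      have hr2eq : r2 = ENNReal.ofReal 2 := by
        rw [hr2def, hqone]
        congr 1
        norm_num
      have hqR0 : qR = 0 := by rw [hqRdef, hqtop]; simp
      have hstop : qstar / 2 = ⊤ := by
        rw [hqtop]; exact ENNReal.top_div_of_ne_top (by norm_num)
      obtain ⟨x, hx0, hx1, hx2⟩ := construct_A' A σ k (by rw [← hr2eq]; exact hmono')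
      refine ⟨x, hx0, by rw [hstop]; exact hx1, ?_⟩
      intro j hj
      rw [hqR0, div_zero, Real.rpow_zero, div_one, htdef, hr2eq]
      exact hx2 j hj
    · -- q > 1
      have hq1' : 1 < q := by
        rcases lt_or_eq_of_le hq1 with h | h
        · exact h
        · exfalso
          rw [← h] at hqconj
          simp at hqconj
          have h0 : (1:ℝ≥0∞) + qstar⁻¹ = 1 + 0 := by simpa using hqconj
          have h1 := (ENNReal.add_right_inj ENNReal.one_ne_top).mp h0
          exact hqtop (ENNReal.inv_eq_zero.mp h1)
      have hsub : (0:ℝ) < q - 1 := by linarith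
      have h2' : 1 / ENNReal.ofReal q = ENNReal.ofReal (1/q) := by
        rw [one_div, ← ENNReal.ofReal_inv_of_pos hq0, one_div]
      have h3' : ENNReal.ofReal (1/q) + ENNReal.ofReal ((q-1)/q) = 1 := by
        rw [← ENNReal.ofReal_add (by positivity) (by positivity),
          show 1/q + (q-1)/q = 1 by field_simp; ring]
        simp
      have h4' : 1 / qstar = ENNReal.ofReal ((q-1)/q) := by
        rw [h2'] at hqconj
        rw [← ENNReal.add_right_inj (a := ENNReal.ofReal (1/q)) ENNReal.ofReal_ne_top,
          hqconj, h3']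
      have h4'' : qstar⁻¹ = ENNReal.ofReal ((q-1)/q) := by rwa [one_div] at h4'
      have h5' : qstar = (ENNReal.ofReal ((q-1)/q))⁻¹ := by rw [← h4'', inv_inv]
      have hqRval : qR = q / (q - 1) := by
        rw [hqRdef, h5', ENNReal.toReal_inv, ENNReal.toReal_ofReal (by positivity), inv_div]
      have hqRpos : 0 < qR := by rw [hqRval]; positivity
      set rR : ℝ := q / (2 - q) with hrRdef
      set sR : ℝ := qR / 2 with hsRdef
      have hrR1 : 1 < rR := by
        rw [hrRdef, lt_div_iff₀ h2q]; linarith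
      have hsRpos : 0 < sR := by rw [hsRdef]; positivity
      have hconj : (rR - 1) * sR = rR := by
        rw [hrRdef, hsRdef, hqRval]
        field_simp
        ring
      have hsne : qstar / 2 ≠ ⊤ := by
        simp [ENNReal.div_eq_top, hqtop]
      have hsR' : (qstar/2).toReal = sR := by
        rw [ENNReal.toReal_div, hsRdef, hqRdef]; norm_num
      have hr2ne : r2 ≠ ⊤ := ENNReal.ofReal_ne_top
      have hr2R : r2.toReal = 2 * rR := by
        rw [hr2def, ENNReal.toReal_ofReal (by positivity), hrRdef]
        ring
      have h2qR : 2/qR = 1/sR := by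
        rw [hsRdef]
        field_simp
      obtain ⟨x, hx0, hx1, hx2⟩ := construct_B' A σ k rR sR hrR1 hsRpos hconj
        (qstar/2) hsne hsR' r2 hr2ne hr2R hmono' ht
      refine ⟨x, hx0, hx1, ?_⟩
      intro j hj
      rw [h2qR]
      exact hx2 j hj
  obtain ⟨x, hx0, hx1, hx2⟩ := hexists
  -- apply key_lower'
  have hs : qstar/2 = ⊤ ∨ 0 < (qstar/2).toReal := by
    by_cases hqtop : qstar = ⊤
    · left; rw [hqtop]; exact ENNReal.top_div_of_ne_top (by norm_num)
    · right
      have hq : 0 < qR := ENNReal.toReal_pos hqs0 hqtop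
      rw [ENNReal.toReal_div]
      simp only [ENNReal.toReal_ofNat]
      exact div_pos hq (by norm_num)
  have hc00 : 0 ≤ t^2 / K ^ (2/qR) :=
    div_nonneg (sq_nonneg t) (Real.rpow_nonneg hKpos.le _)
  have hBx : ∀ j', 0 ≤ ∑ i, (fun (j : Fin n) (i : Fin m) => A i j ^ 2) j' i * x i := by
    intro j'
    apply Finset.sum_nonneg
    intro i _
    exact mul_nonneg (sq_nonneg _) (hx0 i)
  have hklow := key_lower' (qstar/2) (pstar/2) hs hu_ne_top hu0
    (fun (j : Fin n) (i : Fin m) => A i j ^ 2) σ x k (t^2 / K ^ (2/qR)) hc00 hx1 hBx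
    (fun j hj => hx2 j hj)
  -- turn into K^δ * t^2 ≤ opNorm
  have hcast : ((((k:ℕ)+1 : ℕ)):ℝ) = K := by rw [hKdef]; push_cast; ring
  rw [hcast, huR] at hklow
  have hKδ : K ^ δ * t^2 ≤ opNorm (qstar/2) (pstar/2)
      (fun (j : Fin n) (i : Fin m) => A i j ^ 2) := by
    refine le_trans (le_of_eq ?_) hklow
    rw [hδdef, Real.rpow_sub hKpos, one_div_div]
    ring
  -- numeric estimate : log (k+2) ≤ 4/δ * K^δ
  have hlogle : Real.log ((k:ℕ) + 2) ≤ 4/δ * K ^ δ := by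
    have e1 : Real.log ((k:ℕ) + 2) ≤ (((k:ℕ):ℝ) + 2) ^ δ / δ :=
      Real.log_le_rpow_div (by positivity) hδpos
    have e2 : (((k:ℕ):ℝ) + 2) ^ δ ≤ (2*K) ^ δ := by
      apply Real.rpow_le_rpow (by positivity) ?_ hδpos.le
      rw [hKdef]; linarith
    have e3 : (2*K) ^ δ = 2 ^ δ * K ^ δ := Real.mul_rpow (by norm_num) hKpos.le
    have e4 : (2:ℝ) ^ δ ≤ 4 := by
      calc (2:ℝ) ^ δ ≤ 2 ^ (2:ℝ) := Real.rpow_le_rpow_of_exponent_le one_le_two hδ2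
        _ = 4 := by
          rw [show (2:ℝ) = ((2:ℕ):ℝ) from by norm_num, Real.rpow_natCast]
          norm_num
    have e5 : (0:ℝ) ≤ K ^ δ := by positivity
    calc Real.log ((k:ℕ) + 2) ≤ (((k:ℕ):ℝ) + 2) ^ δ / δ := e1
      _ ≤ (2 ^ δ * K ^ δ) / δ := by
          apply div_le_div_of_nonneg_right ?_ hδpos.le
          rw [← e3]; exact e2
      _ ≤ (4 * K ^ δ) / δ := by
          exact div_le_div_of_nonneg_right (mul_le_mul_of_nonneg_right e4 e5) hδpos.le
      _ = 4/δ * K ^ δ := by ring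
  -- finish
  have hop0 : 0 ≤ opNorm (qstar/2) (pstar/2) (fun (j : Fin n) (i : Fin m) => A i j ^ 2) := by
    refine le_trans ?_ hKδ
    positivity
  rw [hRdef]
  rw [← Real.sqrt_sq (by positivity : (0:ℝ) ≤ c * (Real.sqrt (Real.log ((k:ℕ) + 2)) * t))]
  apply Real.sqrt_le_sqrt
  have hsq : (c * (Real.sqrt (Real.log ((k:ℕ) + 2)) * t))^2
      = (δ/4) * (Real.log ((k:ℕ) + 2) * t^2) := by
    rw [mul_pow, mul_pow, hcdef, Real.sq_sqrt (by positivity : (0:ℝ) ≤ δ/4),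
      Real.sq_sqrt hlog0]
  rw [hsq]
  calc (δ/4) * (Real.log ((k:ℕ) + 2) * t^2) ≤ (δ/4) * ((4/δ * K ^ δ) * t^2) := by
        apply mul_le_mul_of_nonneg_left ?_ (by positivity)
        apply mul_le_mul_of_nonneg_right hlogle (by positivity)
    _ = K ^ δ * t^2 := by field_simp
    _ ≤ _ := hKδ
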